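/- arXiv:2405.16349 — 5 statements merged into one kernel-verified Lean document; each statement's English description precedes it below -/
import Mathlib

section
/- For nonnegative integers k ≤ ν, we have ∑_{μ=0}^{ν-k} C(2ν+1, 2ν-2μ+1) · C(ν-μ, k) = 4^{ν-k} · (2ν-k)! / (k! · (2ν-2k)!). -/
open Finset

noncomputable def Sq (ν k : ℕ) : ℚ :=
  ∑ μ ∈ range (ν - k + 1), ((2*ν+1).choose (2*μ) : ℚ) * ((ν-μ).choose k : ℚ)

noncomputable def Tq (ν k : ℕ) : ℚ :=
  ∑ μ ∈ range (ν - k + 1), ((2*ν+1).choose (2*μ+1) : ℚ) * ((ν-μ).choose k : ℚ)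

lemma choose_expand (ν j : ℕ) :
    ((2*ν+2+1).choose (j+2) : ℚ)
      = ((2*ν+1).choose j : ℚ) + 2*((2*ν+1).choose (j+1) : ℚ) + ((2*ν+1).choose (j+2) : ℚ) := by
  rw [show 2*ν+2+1 = (2*ν+1) + 1 + 1 from by ring, show j+2 = (j+1)+1 from rfl,
    Nat.choose_succ_succ ((2*ν+1)+1) (j+1),
    Nat.choose_succ_succ (2*ν+1) j, Nat.choose_succ_succ (2*ν+1) (j+1)]
  push_cast
  ring

lemma D_succ (ν k : ℕ) (h : k + 1 ≤ ν) :
    ∑ μ ∈ range (ν - k + 1), ((2*ν+1).choose (2*μ) : ℚ) * ((ν+1-μ).choose (k+1) : ℚ)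
      = Sq ν k + Sq ν (k+1) := by
  have step : ∀ μ ∈ range (ν - k + 1),
      ((2*ν+1).choose (2*μ) : ℚ) * ((ν+1-μ).choose (k+1) : ℚ)
        = ((2*ν+1).choose (2*μ) : ℚ) * ((ν-μ).choose k : ℚ)
          + ((2*ν+1).choose (2*μ) : ℚ) * ((ν-μ).choose (k+1) : ℚ) := by
    intro μ hμ
    rw [mem_range] at hμ
    rw [show ν + 1 - μ = (ν - μ) + 1 from by omega, Nat.choose_succ_succ (ν-μ) k]
    push_cast
    ring
  rw [Finset.sum_congr rfl step, Finset.sum_add_distrib]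
  congr 1
  unfold Sq
  rw [show ν - k + 1 = (ν - (k+1) + 1) + 1 from by omega, Finset.sum_range_succ,
    show ν - (ν - (k+1) + 1) = k from by omega]
  simp [Nat.choose_succ_self]

lemma E_succ (ν k : ℕ) (h : k + 1 ≤ ν) :
    ∑ μ ∈ range (ν - k + 1), ((2*ν+1).choose (2*μ+1) : ℚ) * ((ν+1-μ).choose (k+1) : ℚ)
      = Tq ν k + Tq ν (k+1) := by
  have step : ∀ μ ∈ range (ν - k + 1),
      ((2*ν+1).choose (2*μ+1) : ℚ) * ((ν+1-μ).choose (k+1) : ℚ)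
        = ((2*ν+1).choose (2*μ+1) : ℚ) * ((ν-μ).choose k : ℚ)
          + ((2*ν+1).choose (2*μ+1) : ℚ) * ((ν-μ).choose (k+1) : ℚ) := by
    intro μ hμ
    rw [mem_range] at hμ
    rw [show ν + 1 - μ = (ν - μ) + 1 from by omega, Nat.choose_succ_succ (ν-μ) k]
    push_cast
    ring
  rw [Finset.sum_congr rfl step, Finset.sum_add_distrib]
  congr 1
  unfold Tq
  rw [show ν - k + 1 = (ν - (k+1) + 1) + 1 from by omega, Finset.sum_range_succ,
    show ν - (ν - (k+1) + 1) = k from by omega]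
  simp [Nat.choose_succ_self]

lemma Sq_succ (ν k : ℕ) (h : k + 1 ≤ ν) :
    Sq (ν+1) (k+1) = 2 * Sq ν (k+1) + Sq ν k + 2 * Tq ν (k+1) := by
  have key := D_succ ν k h
  rw [Finset.sum_range_succ'] at key
  simp only [Sq, Tq] at key ⊢
  rw [show ν + 1 - (k+1) + 1 = (ν - (k+1) + 1) + 1 from by omega, Finset.sum_range_succ']
  simp only [Nat.succ_sub_succ, Nat.sub_zero, Nat.mul_zero, Nat.choose_zero_right,
    Nat.cast_one, show ∀ i:ℕ, 2*(i+1) = 2*i+2 from fun i => by ring] at key ⊢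
  rw [show ν - k = ν - (k+1) + 1 from by omega] at key ⊢
  simp only [choose_expand, add_mul, Finset.sum_add_distrib, mul_assoc, ← Finset.mul_sum]
  linear_combination key

lemma Tq_succ (ν k : ℕ) (h : k + 1 ≤ ν) :
    Tq (ν+1) (k+1) = 2 * Tq ν (k+1) + Tq ν k + 2 * Sq ν (k+1) + 2 * Sq ν k := by
  have keyD := D_succ ν k h
  have keyE := E_succ ν k h
  rw [Finset.sum_range_succ'] at keyD keyE
  simp only [Sq, Tq] at keyD keyE ⊢
  rw [show ν + 1 - (k+1) + 1 = (ν - (k+1) + 1) + 1 from by omega, Finset.sum_range_succ']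
  simp only [Nat.succ_sub_succ, Nat.sub_zero, Nat.mul_zero, Nat.choose_zero_right,
    Nat.cast_one, show ∀ i:ℕ, 2*(i+1) = 2*i+2 from fun i => by ring,
    show ∀ i:ℕ, 2*i+2+1 = (2*i+1)+2 from fun i => by ring] at keyD keyE ⊢
  rw [show ν - k = ν - (k+1) + 1 from by omega] at keyD keyE ⊢
  simp only [choose_expand, add_mul, Finset.sum_add_distrib, mul_assoc, ← Finset.mul_sum,
    show ∀ i:ℕ, 2*i+1+1 = 2*i+2 from fun i => by ring, Nat.choose_one_right,
    show (0:ℕ)+1 = 1 from rfl, show 2*ν+1+2 = 2*ν+3 from by ring]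
  simp only [show (0:ℕ)+1 = 1 from rfl, Nat.choose_one_right] at keyE
  push_cast at keyE ⊢
  linear_combination keyE + 2*keyD

lemma D_zero (ν : ℕ) :
    ∑ μ ∈ range (ν + 1 + 1), ((2*ν+1).choose (2*μ) : ℚ) * ((ν+1-μ).choose 0 : ℚ)
      = Sq ν 0 := by
  simp only [Nat.choose_zero_right, Nat.cast_one, mul_one]
  rw [Finset.sum_range_succ, Nat.choose_eq_zero_of_lt (by omega : 2*ν+1 < 2*(ν+1))]
  simp [Sq]

lemma E_zero (ν : ℕ) :
    ∑ μ ∈ range (ν + 1 + 1), ((2*ν+1).choose (2*μ+1) : ℚ) * ((ν+1-μ).choose 0 : ℚ)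
      = Tq ν 0 := by
  simp only [Nat.choose_zero_right, Nat.cast_one, mul_one]
  rw [Finset.sum_range_succ, Nat.choose_eq_zero_of_lt (by omega : 2*ν+1 < 2*(ν+1)+1)]
  simp [Tq]

lemma Sq_zero (ν : ℕ) :
    Sq (ν+1) 0 = 2 * Sq ν 0 + 2 * Tq ν 0 := by
  have key := D_zero ν
  rw [Finset.sum_range_succ'] at key
  simp only [Sq, Tq] at key ⊢
  rw [show ν + 1 - 0 + 1 = (ν + 1) + 1 from by omega, Finset.sum_range_succ']
  simp only [Nat.succ_sub_succ, Nat.sub_zero, Nat.mul_zero, Nat.choose_zero_right,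
    Nat.cast_one, show ∀ i:ℕ, 2*(i+1) = 2*i+2 from fun i => by ring,
    show ν - 0 = ν from rfl] at key ⊢
  simp only [choose_expand, add_mul, Finset.sum_add_distrib, mul_assoc, ← Finset.mul_sum]
  linear_combination key

lemma Tq_zero (ν : ℕ) :
    Tq (ν+1) 0 = 2 * Sq ν 0 + 2 * Tq ν 0 := by
  have keyD := D_zero ν
  have keyE := E_zero ν
  rw [Finset.sum_range_succ'] at keyD keyE
  simp only [Sq, Tq] at keyD keyE ⊢
  rw [show ν + 1 - 0 + 1 = (ν + 1) + 1 from by omega, Finset.sum_range_succ']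
  simp only [Nat.succ_sub_succ, Nat.sub_zero, Nat.mul_zero, Nat.choose_zero_right,
    Nat.cast_one, show ∀ i:ℕ, 2*(i+1) = 2*i+2 from fun i => by ring,
    show ∀ i:ℕ, 2*i+2+1 = (2*i+1)+2 from fun i => by ring,
    show ν - 0 = ν from rfl] at keyD keyE ⊢
  simp only [choose_expand, add_mul, Finset.sum_add_distrib, mul_assoc, ← Finset.mul_sum,
    show ∀ i:ℕ, 2*i+1+1 = 2*i+2 from fun i => by ring, Nat.choose_one_right,
    show (0:ℕ)+1 = 1 from rfl, show 2*ν+1+2 = 2*ν+3 from by ring]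
  simp only [show (0:ℕ)+1 = 1 from rfl, Nat.choose_one_right] at keyE
  push_cast at keyE ⊢
  linear_combination keyE + 2*keyD

noncomputable def csq (ν k : ℕ) : ℚ :=
  4^(ν-k) * ((2*ν-k).factorial : ℚ) / ((k.factorial : ℚ) * ((2*ν-2*k).factorial : ℚ))

noncomputable def ctq (ν k : ℕ) : ℚ :=
  4^(ν-k) * (2*ν+1) * ((2*ν-k).factorial : ℚ) / ((k.factorial : ℚ) * ((2*ν+1-2*k).factorial : ℚ))

lemma factne (m : ℕ) : ((m.factorial : ℚ)) ≠ 0 :=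
  Nat.cast_ne_zero.mpr (Nat.factorial_ne_zero m)

lemma csq_zero (ν : ℕ) : csq (ν+1) 0 = 2 * csq ν 0 + 2 * ctq ν 0 := by
  simp only [csq, ctq, Nat.sub_zero, Nat.factorial_zero, Nat.mul_zero, show (2:ℕ)*0 = 0 from rfl]
  rw [show 2*(ν+1) = 2*ν+1+1 from by ring]
  simp only [Nat.factorial_succ]
  have h := factne (2*ν)
  push_cast
  field_simp
  ring

lemma ctq_zero (ν : ℕ) : ctq (ν+1) 0 = 2 * csq ν 0 + 2 * ctq ν 0 := by
  simp only [csq, ctq, Nat.sub_zero, Nat.factorial_zero, Nat.mul_zero, show (2:ℕ)*0 = 0 from rfl]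
  rw [show 2*(ν+1)+1 = 2*ν+1+1+1 from by ring, show 2*(ν+1) = 2*ν+1+1 from by ring]
  simp only [Nat.factorial_succ]
  have h := factne (2*ν)
  push_cast
  field_simp
  ring

lemma csq_rec (n k : ℕ) :
    csq (k+1+n+1) (k+1)
      = 2 * csq (k+1+n) (k+1) + csq (k+1+n) k + 2 * ctq (k+1+n) (k+1) := by
  simp only [csq, ctq]
  rw [show k+1+n+1 - (k+1) = n+1 from by omega,
      show 2*(k+1+n+1) - (k+1) = k+2*n+1+1+1 from by omega,
      show 2*(k+1+n+1) - 2*(k+1) = 2*n+1+1 from by omega,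
      show k+1+n - (k+1) = n from by omega,
      show 2*(k+1+n) - (k+1) = k+2*n+1 from by omega,
      show 2*(k+1+n) - 2*(k+1) = 2*n from by omega,
      show k+1+n - k = n+1 from by omega,
      show 2*(k+1+n) - k = k+2*n+1+1 from by omega,
      show 2*(k+1+n) - 2*k = 2*n+1+1 from by omega,
      show 2*(k+1+n)+1 - 2*(k+1) = 2*n+1 from by omega]
  simp only [Nat.factorial_succ]
  have h0 := factne k
  have h1 := factne (2*n)
  have h2 := factne (k+2*n)
  have h3 : ((k:ℚ)+1) ≠ 0 := by positivity
  have h4 : ((k:ℚ)+2*n+1) ≠ 0 := by positivity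
  have h5 : ((k:ℚ)+2*n+2) ≠ 0 := by positivity
  have h6 : ((k:ℚ)+2*n+3) ≠ 0 := by positivity
  have h7 : (2*(n:ℚ)+1) ≠ 0 := by positivity
  have h8 : (2*(n:ℚ)+2) ≠ 0 := by positivity
  push_cast
  field_simp
  ring

lemma ctq_rec (n k : ℕ) :
    ctq (k+1+n+1) (k+1)
      = 2 * ctq (k+1+n) (k+1) + ctq (k+1+n) k
        + 2 * csq (k+1+n) (k+1) + 2 * csq (k+1+n) k := by
  simp only [csq, ctq]
  rw [show k+1+n+1 - (k+1) = n+1 from by omega,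
      show 2*(k+1+n+1) - (k+1) = k+2*n+1+1+1 from by omega,
      show 2*(k+1+n+1)+1 - 2*(k+1) = 2*n+1+1+1 from by omega,
      show k+1+n - (k+1) = n from by omega,
      show 2*(k+1+n) - (k+1) = k+2*n+1 from by omega,
      show 2*(k+1+n) - 2*(k+1) = 2*n from by omega,
      show k+1+n - k = n+1 from by omega,
      show 2*(k+1+n) - k = k+2*n+1+1 from by omega,
      show 2*(k+1+n) - 2*k = 2*n+1+1 from by omega,
      show 2*(k+1+n)+1 - 2*(k+1) = 2*n+1 from by omega,
      show 2*(k+1+n)+1 - 2*k = 2*n+1+1+1 from by omega]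
  simp only [Nat.factorial_succ]
  have h0 := factne k
  have h1 := factne (2*n)
  have h2 := factne (k+2*n)
  have h3 : ((k:ℚ)+1) ≠ 0 := by positivity
  have h4 : ((k:ℚ)+2*n+1) ≠ 0 := by positivity
  have h5 : ((k:ℚ)+2*n+2) ≠ 0 := by positivity
  have h6 : ((k:ℚ)+2*n+3) ≠ 0 := by positivity
  have h7 : (2*(n:ℚ)+1) ≠ 0 := by positivity
  have h8 : (2*(n:ℚ)+2) ≠ 0 := by positivity
  have h9 : (2*(n:ℚ)+3) ≠ 0 := by positivity
  push_cast
  field_simp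
  ring

lemma Sq_diag (ν : ℕ) : Sq ν ν = 1 := by
  simp [Sq]

lemma Tq_diag (ν : ℕ) : Tq ν ν = 2*ν+1 := by
  simp [Tq]

lemma csq_diag (ν : ℕ) : csq ν ν = 1 := by
  simp only [csq]
  rw [Nat.sub_self, show 2*ν - ν = ν from by omega, show 2*ν - 2*ν = 0 from by omega]
  simp [factne ν]

lemma ctq_diag (ν : ℕ) : ctq ν ν = 2*ν+1 := by
  simp only [ctq]
  rw [Nat.sub_self, show 2*ν - ν = ν from by omega, show 2*ν+1 - 2*ν = 1 from by omega]
  simp [factne ν, Nat.factorial_one]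

lemma main_lemma : ∀ ν k, k ≤ ν → Sq ν k = csq ν k ∧ Tq ν k = ctq ν k := by
  intro ν
  induction ν with
  | zero =>
    intro k hk
    interval_cases k
    constructor
    · rw [Sq_diag, csq_diag]
    · rw [Tq_diag, ctq_diag]
  | succ ν ih =>
    intro k hk
    match k, hk with
    | 0, _ =>
      obtain ⟨hS, hT⟩ := ih 0 (Nat.zero_le ν)
      exact ⟨by rw [Sq_zero, csq_zero, hS, hT], by rw [Tq_zero, ctq_zero, hS, hT]⟩
    | (k+1), hk =>
      rcases Nat.lt_or_ge k ν with h | h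
      · -- k+1 ≤ ν
        have hk1 : k + 1 ≤ ν := h
        obtain ⟨n, rfl⟩ : ∃ n, ν = k+1+n := ⟨ν-(k+1), by omega⟩
        obtain ⟨hS1, hT1⟩ := ih (k+1) hk1
        obtain ⟨hS0, hT0⟩ := ih k (by omega)
        constructor
        · rw [Sq_succ _ _ hk1, csq_rec, hS1, hS0, hT1]
        · rw [Tq_succ _ _ hk1, ctq_rec, hS1, hS0, hT1, hT0]
      · -- k+1 = ν+1
        have : k = ν := by omega
        subst this
        constructor
        · rw [Sq_diag, csq_diag]
        · rw [Tq_diag, ctq_diag]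

theorem stmt_0 (ν k : ℕ) (hk : k ≤ ν) :
    (∑ μ ∈ Finset.range (ν - k + 1),
      ((Nat.choose (2 * ν + 1) (2 * ν - 2 * μ + 1) : ℚ) * (Nat.choose (ν - μ) k : ℚ)))
      = 4 ^ (ν - k) * (Nat.factorial (2 * ν - k) : ℚ) /
          ((Nat.factorial k : ℚ) * (Nat.factorial (2 * ν - 2 * k) : ℚ)) := by
  have step : ∀ μ ∈ range (ν - k + 1),
      ((Nat.choose (2 * ν + 1) (2 * ν - 2 * μ + 1) : ℚ) * (Nat.choose (ν - μ) k : ℚ))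
        = ((2*ν+1).choose (2*μ) : ℚ) * ((ν-μ).choose k : ℚ) := by
    intro μ hμ
    rw [mem_range] at hμ
    have hμν : μ ≤ ν := by omega
    rw [show 2*ν - 2*μ + 1 = (2*ν+1) - 2*μ from by omega,
      Nat.choose_symm (by omega : 2*μ ≤ 2*ν+1)]
  rw [Finset.sum_congr rfl step]
  exact (main_lemma ν k hk).1
end

section
/- For nonnegative integers μ ≤ ν, binomial(ν+1/2, ν-μ) · binomial(ν-1/2, μ) = 4^{-ν} · C(2ν, ν) · C(2ν+1, 2μ+1), where binomial(α, j) := (α)(α-1)⋯(α-j+1)/j! is the generalized binomial coefficient for real α. -/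
open Nat Finset

lemma fact_even (k : ℕ) : (2*k)! = 2^k * k ! * (2*k-1)‼ := by
  cases k with
  | zero => rfl
  | succ m =>
    have h1 : 2*(m+1) = (2*m+1)+1 := by ring
    rw [h1, Nat.factorial_eq_mul_doubleFactorial]
    have : (2*m+1)+1 = 2*(m+1) := by ring
    rw [this, Nat.doubleFactorial_two_mul]
    have : 2*(m+1) - 1 = 2*m+1 := by omega
    rw [this]

lemma fact_odd (k : ℕ) : (2*k+1)! = (2*k+1)‼ * (2^k * k !) := by
  rw [Nat.factorial_eq_mul_doubleFactorial, Nat.doubleFactorial_two_mul]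

lemma prodOdd (n : ℕ) : ∀ j, j ≤ n + 1 →
    (∏ i ∈ Finset.range j, ((2*n+1 : ℝ) - 2*i)) * ((2*(n+1-j)-1)‼ : ℝ) = ((2*n+1)‼ : ℝ) := by
  intro j
  induction j with
  | zero =>
    intro _
    simp
    have e : 2*(n+1)-1 = 2*n+1 := by omega
    rw [e]
  | succ m ih =>
    intro hm
    have hm' : m ≤ n + 1 := by omega
    rw [Finset.prod_range_succ]
    have key : ((2*n+1 : ℝ) - 2*m) * ((2*(n+1-(m+1))-1)‼ : ℝ) = ((2*(n+1-m)-1)‼ : ℝ) := by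
      have h1 : n + 1 - m = (n - m) + 1 := by omega
      have h2 : 2*((n-m)+1) - 1 = 2*(n-m) + 1 := by omega
      rw [h1, h2]
      rcases Nat.eq_or_lt_of_le (Nat.zero_le (n - m)) with h0 | h0
      · have : n = m := by omega
        subst this
        simp [← h0]
      · have h3 : 2*(n-m)+1 = (2*(n-m)-1) + 2 := by omega
        rw [h3, Nat.doubleFactorial_add_two]
        have h4 : n + 1 - (m+1) = n - m := by omega
        rw [h4]
        push_cast
        have : ((2*(n-m)-1 : ℕ) : ℝ) + 2 = (2*n+1 : ℝ) - 2*m := by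
          have : (2*(n-m)-1 : ℕ) = 2*(n-m)-1 := rfl
          push_cast [Nat.cast_sub (by omega : 1 ≤ 2*(n-m))]
          push_cast [Nat.cast_sub (by omega : m ≤ n)]
          ring
        rw [this]
    calc (∏ i ∈ Finset.range m, ((2*n+1 : ℝ) - 2*i)) * ((2*n+1:ℝ) - 2*m) * ((2*(n+1-(m+1))-1)‼ : ℝ)
        = (∏ i ∈ Finset.range m, ((2*n+1 : ℝ) - 2*i)) * (((2*n+1:ℝ) - 2*m) * ((2*(n+1-(m+1))-1)‼ : ℝ)) := by ring
      _ = (∏ i ∈ Finset.range m, ((2*n+1 : ℝ) - 2*i)) * ((2*(n+1-m)-1)‼ : ℝ) := by rw [key]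
      _ = ((2*n+1)‼ : ℝ) := ih hm'

/-- The generalized binomial coefficient `α(α-1)⋯(α-j+1)/j!` for real `α`. -/
noncomputable def genBinom (α : ℝ) (j : ℕ) : ℝ :=
  (∏ i ∈ Finset.range j, (α - i)) / (Nat.factorial j : ℝ)

theorem stmt_2 (ν μ : ℕ) (h : μ ≤ ν) :
    genBinom ((ν : ℝ) + 1 / 2) (ν - μ) * genBinom ((ν : ℝ) - 1 / 2) μ =
      4 ^ (-(ν : ℤ)) * (Nat.choose (2 * ν) ν : ℝ) * (Nat.choose (2 * ν + 1) (2 * μ + 1) : ℝ) := by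
  obtain ⟨k, rfl⟩ : ∃ k, ν = μ + k := ⟨ν - μ, by omega⟩
  have hsub : μ + k - μ = k := by omega
  rw [hsub]
  rcases Nat.eq_zero_or_pos (μ + k) with h0 | hpos
  · have hμ : μ = 0 := by omega
    have hk : k = 0 := by omega
    subst hμ; subst hk
    simp [genBinom]
  -- first factor
  have g1 : genBinom ((↑(μ+k):ℝ) + 1/2) k
      = ((2*(μ+k)+1)‼ : ℝ) / (((2*μ+1)‼ : ℝ) * (2^k * (k)!)) := by
    have e1 : ∏ i ∈ range k, ((↑(μ+k):ℝ) + 1/2 - i)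
        = (∏ i ∈ range k, ((2*(μ+k)+1 : ℝ) - 2*i)) / 2^k := by
      have hc : ∀ i ∈ range k, ((↑(μ+k):ℝ) + 1/2 - i) = ((2*(μ+k)+1 : ℝ) - 2*i)/2 := by
        intro i _; push_cast; ring
      rw [Finset.prod_congr rfl hc, Finset.prod_div_distrib, Finset.prod_const,
        Finset.card_range]
    have e2 := prodOdd (μ+k) k (by omega)
    have hidx : 2*(μ+k+1-k)-1 = 2*μ+1 := by omega
    rw [hidx] at e2
    unfold genBinom
    rw [e1, ← e2]
    have hd : ((2*μ+1)‼ : ℝ) ≠ 0 := by exact_mod_cast (Nat.doubleFactorial_pos _).ne'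
    have hk2 : ((k)! : ℝ) ≠ 0 := by exact_mod_cast (Nat.factorial_pos _).ne'
    field_simp
    push_cast; ring
  -- second factor
  have g2 : genBinom ((↑(μ+k):ℝ) - 1/2) μ
      = ((2*(μ+k)-1)‼ : ℝ) / (((2*k-1)‼ : ℝ) * (2^μ * (μ)!)) := by
    have e2 := prodOdd (μ+k-1) μ (by omega)
    have hn : (2*(μ+k-1)+1 : ℕ) = 2*(μ+k)-1 := by omega
    have hidx : 2*((μ+k-1)+1-μ)-1 = 2*k-1 := by omega
    have hcast : ((μ+k-1 : ℕ) : ℝ) = (↑(μ+k):ℝ) - 1 := by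
      push_cast [Nat.cast_sub hpos]; ring
    rw [hidx, hn, hcast] at e2
    have e1 : ∏ i ∈ range μ, ((↑(μ+k):ℝ) - 1/2 - i)
        = (∏ i ∈ range μ, (2*((↑(μ+k):ℝ) - 1)+1 - 2*i)) / 2^μ := by
      have hc : ∀ i ∈ range μ, ((↑(μ+k):ℝ) - 1/2 - i) = (2*((↑(μ+k):ℝ)-1)+1 - 2*i)/2 := by
        intro i _; push_cast; ring
      rw [Finset.prod_congr rfl hc, Finset.prod_div_distrib, Finset.prod_const,
        Finset.card_range]
    unfold genBinom
    rw [e1, ← e2]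
    have hd : ((2*k-1)‼ : ℝ) ≠ 0 := by exact_mod_cast (Nat.doubleFactorial_pos _).ne'
    have hk2 : ((μ)! : ℝ) ≠ 0 := by exact_mod_cast (Nat.factorial_pos _).ne'
    field_simp
  rw [g1, g2]
  rw [Nat.cast_choose ℝ (by omega : μ + k ≤ 2*(μ+k)),
      Nat.cast_choose ℝ (by omega : 2*μ+1 ≤ 2*(μ+k)+1)]
  have hs1 : 2*(μ+k) - (μ+k) = μ+k := by omega
  have hs2 : 2*(μ+k)+1 - (2*μ+1) = 2*k := by omega
  rw [hs1, hs2]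
  have hf1 : ((2*(μ+k))! : ℝ) = 2^(μ+k) * ((μ+k))! * ((2*(μ+k)-1)‼ : ℝ) := by
    exact_mod_cast congrArg (Nat.cast : ℕ → ℝ) (fact_even (μ+k))
  have hf2 : ((2*(μ+k)+1)! : ℝ) = ((2*(μ+k)+1)‼ : ℝ) * (2^(μ+k) * ((μ+k))!) := by
    exact_mod_cast congrArg (Nat.cast : ℕ → ℝ) (fact_odd (μ+k))
  have hf3 : ((2*μ+1)! : ℝ) = ((2*μ+1)‼ : ℝ) * (2^μ * (μ)!) := by
    exact_mod_cast congrArg (Nat.cast : ℕ → ℝ) (fact_odd μ)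
  have hf4 : ((2*k)! : ℝ) = 2^k * (k)! * ((2*k-1)‼ : ℝ) := by
    exact_mod_cast congrArg (Nat.cast : ℕ → ℝ) (fact_even k)
  rw [hf1, hf2, hf3, hf4, zpow_neg, zpow_natCast]
  have h4 : (4:ℝ)^(μ+k) = 2^(μ+k) * 2^(μ+k) := by
    rw [← mul_pow]; norm_num
  rw [h4]
  have n1 : ((2*(μ+k)+1)‼ : ℝ) ≠ 0 := by exact_mod_cast (Nat.doubleFactorial_pos _).ne'
  have n2 : ((2*(μ+k)-1)‼ : ℝ) ≠ 0 := by exact_mod_cast (Nat.doubleFactorial_pos _).ne'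
  have n3 : ((2*μ+1)‼ : ℝ) ≠ 0 := by exact_mod_cast (Nat.doubleFactorial_pos _).ne'
  have n4 : ((2*k-1)‼ : ℝ) ≠ 0 := by exact_mod_cast (Nat.doubleFactorial_pos _).ne'
  have n5 : ((μ+k)! : ℝ) ≠ 0 := by exact_mod_cast (Nat.factorial_pos _).ne'
  have n6 : ((μ)! : ℝ) ≠ 0 := by exact_mod_cast (Nat.factorial_pos _).ne'
  have n7 : ((k)! : ℝ) ≠ 0 := by exact_mod_cast (Nat.factorial_pos _).ne'
  field_simp
end

section
/- For nonnegative integers μ ≤ ν, binomial(ν+1/2, μ) · binomial(ν-1/2, ν-μ) = 4^{-ν} · C(2ν, ν) · C(2ν+1, 2ν-2μ+1). -/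
lemma genBinom_succ (α : ℝ) (j : ℕ) :
    genBinom α (j+1) = genBinom α j * (α - j) / (j+1) := by
  have hj : (Nat.factorial j : ℝ) ≠ 0 := Nat.cast_ne_zero.mpr (Nat.factorial_ne_zero _)
  unfold genBinom
  rw [Finset.prod_range_succ, Nat.factorial_succ]
  push_cast
  rw [div_mul_eq_mul_div, div_div, mul_comm ((j:ℝ)+1)]

lemma lemA (μ k : ℕ) :
    genBinom ((μ:ℝ) + k + 1/2) μ =
      (Nat.factorial (2*(μ+k)+1) : ℝ) * (Nat.factorial k) /
      (4^μ * Nat.factorial μ * Nat.factorial (2*k+1) * Nat.factorial (μ+k)) := by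
  induction μ generalizing k with
  | zero =>
    simp only [genBinom, Finset.range_zero, Finset.prod_empty, Nat.factorial_zero,
      Nat.zero_add, pow_zero, Nat.cast_one, one_mul, Nat.zero_add]
    rw [eq_div_iff (by positivity)]
    ring
  | succ n ih =>
    have h := ih (k+1)
    rw [show n + (k+1) = n+1+k from by omega] at h
    have e1 : ((n+1:ℕ):ℝ) + k + 1/2 = (n:ℝ) + ((k+1:ℕ):ℝ) + 1/2 := by push_cast; ring
    rw [genBinom_succ, e1, h]
    rw [show 2*(k+1)+1 = (2*k+1)+1+1 from by omega,
        show (2*(n+1+k)+1) = (2*(n+1+k)+1) from rfl]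
    rw [Nat.factorial_succ ((2*k+1)+1), Nat.factorial_succ (2*k+1),
        Nat.factorial_succ k, Nat.factorial_succ n]
    have h1 : (Nat.factorial n : ℝ) ≠ 0 := Nat.cast_ne_zero.mpr (Nat.factorial_ne_zero _)
    have h2 : (Nat.factorial k : ℝ) ≠ 0 := Nat.cast_ne_zero.mpr (Nat.factorial_ne_zero _)
    have h3 : (Nat.factorial (2*k+1) : ℝ) ≠ 0 := Nat.cast_ne_zero.mpr (Nat.factorial_ne_zero _)
    have h4 : (Nat.factorial (n+1+k) : ℝ) ≠ 0 := Nat.cast_ne_zero.mpr (Nat.factorial_ne_zero _)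
    push_cast
    field_simp
    ring

lemma lemB (j μ : ℕ) :
    genBinom ((j:ℝ) + μ - 1/2) j =
      (Nat.factorial (2*(j+μ)) : ℝ) * (Nat.factorial μ) /
      (4^j * Nat.factorial j * Nat.factorial (j+μ) * Nat.factorial (2*μ)) := by
  induction j generalizing μ with
  | zero =>
    simp only [genBinom, Finset.range_zero, Finset.prod_empty, Nat.factorial_zero,
      Nat.zero_add, pow_zero, Nat.cast_one, one_mul, Nat.zero_add]
    rw [eq_div_iff (by positivity)]
    ring
  | succ n ih =>
    have h := ih (μ+1)
    rw [show n + (μ+1) = n+1+μ from by omega] at h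
    have e1 : ((n+1:ℕ):ℝ) + μ - 1/2 = (n:ℝ) + ((μ+1:ℕ):ℝ) - 1/2 := by push_cast; ring
    rw [genBinom_succ, e1, h]
    rw [show 2*(μ+1) = (2*μ)+1+1 from by omega]
    rw [Nat.factorial_succ ((2*μ)+1), Nat.factorial_succ (2*μ),
        Nat.factorial_succ μ, Nat.factorial_succ n]
    have h1 : (Nat.factorial n : ℝ) ≠ 0 := Nat.cast_ne_zero.mpr (Nat.factorial_ne_zero _)
    have h2 : (Nat.factorial μ : ℝ) ≠ 0 := Nat.cast_ne_zero.mpr (Nat.factorial_ne_zero _)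
    have h3 : (Nat.factorial (2*μ) : ℝ) ≠ 0 := Nat.cast_ne_zero.mpr (Nat.factorial_ne_zero _)
    have h4 : (Nat.factorial (n+1+μ) : ℝ) ≠ 0 := Nat.cast_ne_zero.mpr (Nat.factorial_ne_zero _)
    push_cast
    field_simp
    ring

theorem stmt_3 (ν μ : ℕ) (h : μ ≤ ν) :
    genBinom ((ν : ℝ) + 1 / 2) μ * genBinom ((ν : ℝ) - 1 / 2) (ν - μ) =
      4 ^ (-(ν : ℤ)) * (Nat.choose (2 * ν) ν : ℝ) *
        (Nat.choose (2 * ν + 1) (2 * ν - 2 * μ + 1) : ℝ) := by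
  obtain ⟨k, rfl⟩ : ∃ k, ν = μ + k := ⟨ν - μ, by omega⟩
  have hA := lemA μ k
  have hB := lemB k μ
  rw [show k + μ = μ + k from by omega] at hB
  have e1 : ((μ+k : ℕ) : ℝ) + 1/2 = (μ:ℝ) + k + 1/2 := by push_cast; ring
  have e2 : ((μ+k : ℕ) : ℝ) - 1/2 = (k:ℝ) + μ - 1/2 := by push_cast; ring
  have e3 : (μ + k) - μ = k := by omega
  have e4 : 2*(μ+k) - 2*μ + 1 = 2*k+1 := by omega
  rw [e1, e2, e3, e4, hA, hB]
  have hc1 : (Nat.choose (2*(μ+k)) (μ+k) : ℝ) =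
      Nat.factorial (2*(μ+k)) / (Nat.factorial (μ+k) * Nat.factorial (μ+k)) := by
    rw [Nat.cast_choose ℝ (by omega), show 2*(μ+k) - (μ+k) = μ+k from by omega]
  have hc2 : (Nat.choose (2*(μ+k)+1) (2*k+1) : ℝ) =
      Nat.factorial (2*(μ+k)+1) / (Nat.factorial (2*k+1) * Nat.factorial (2*μ)) := by
    rw [Nat.cast_choose ℝ (by omega), show (2*(μ+k)+1) - (2*k+1) = 2*μ from by omega]
  rw [hc1, hc2]
  have h1 : (Nat.factorial μ : ℝ) ≠ 0 := Nat.cast_ne_zero.mpr (Nat.factorial_ne_zero _)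
  have h2 : (Nat.factorial k : ℝ) ≠ 0 := Nat.cast_ne_zero.mpr (Nat.factorial_ne_zero _)
  have h3 : (Nat.factorial (2*k+1) : ℝ) ≠ 0 := Nat.cast_ne_zero.mpr (Nat.factorial_ne_zero _)
  have h4 : (Nat.factorial (μ+k) : ℝ) ≠ 0 := Nat.cast_ne_zero.mpr (Nat.factorial_ne_zero _)
  have h5 : (Nat.factorial (2*μ) : ℝ) ≠ 0 := Nat.cast_ne_zero.mpr (Nat.factorial_ne_zero _)
  have h6 : (4:ℝ) ^ (-(((μ+k:ℕ)):ℤ)) = 1 / (4^μ * 4^k) := by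
    rw [zpow_neg, zpow_natCast, pow_add]
    ring
  rw [h6]
  field_simp
end

section
/- For all real numbers a, b, c with c - a - b > 0 and c not a nonpositive integer, the hypergeometric series ₂F₁(a, b; c; 1) := ∑_{j≥0} (a)_j (b)_j / ((c)_j j!) converges and equals Γ(c)Γ(c-a-b)/(Γ(c-a)Γ(c-b)) (Gauss's summation theorem). -/
open Filter Topology Finset

namespace Gauss15

noncomputable def P (x : ℝ) (j : ℕ) : ℝ := (ascPochhammer ℝ j).eval x

lemma P_zero (x : ℝ) : P x 0 = 1 := by simp [P]

lemma P_succ (x : ℝ) (j : ℕ) : P x (j + 1) = P x j * (x + j) := by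
  simp [P, ascPochhammer_succ_eval]

lemma P_eq_prod (x : ℝ) (j : ℕ) : P x j = ∏ i ∈ range j, (x + i) := by
  induction j with
  | zero => simp [P_zero]
  | succ n ih => rw [P_succ, ih, prod_range_succ]

lemma P_ne_zero {x : ℝ} (hx : ∀ m : ℕ, x ≠ -(m : ℝ)) (j : ℕ) : P x j ≠ 0 := by
  rw [P_eq_prod]
  exact prod_ne_zero_iff.2 fun i _ => by
    have := hx i; intro hzero; exact this (by linarith)

lemma P_pos {x : ℝ} (hx : 0 < x) (j : ℕ) : 0 < P x j :=
  ascPochhammer_pos j x hx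

end Gauss15

namespace Gauss15

/-- Euler-limit asymptotics for Pochhammer: `(x)_n / (n! n^(x-1)) → 1/Γ(x)`. -/
lemma P_asymp {x : ℝ} (hx : ∀ m : ℕ, x ≠ -(m : ℝ)) :
    Tendsto (fun n : ℕ => P x n / ((n.factorial : ℝ) * (n : ℝ) ^ (x - 1)))
      atTop (𝓝 (Real.Gamma x)⁻¹) := by
  have hΓ : Real.Gamma x ≠ 0 := Real.Gamma_ne_zero hx
  have h1 : Tendsto (fun n : ℕ => (Real.GammaSeq x n)⁻¹) atTop (𝓝 (Real.Gamma x)⁻¹) :=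
    (Real.GammaSeq_tendsto_Gamma x).inv₀ hΓ
  have h2 : Tendsto (fun n : ℕ => ((n : ℝ) / ((n : ℝ) + 1)) ^ x) atTop (𝓝 1) := by
    have hd : Tendsto (fun n : ℕ => (n : ℝ) / ((n : ℝ) + 1)) atTop (𝓝 1) :=
      tendsto_natCast_div_add_atTop (1 : ℝ)
    have hc' : ContinuousAt (fun t : ℝ => t ^ x) 1 :=
      Real.continuousAt_rpow_const 1 x (Or.inl one_ne_zero)
    have := hc'.tendsto.comp hd
    simpa [Function.comp_def, Real.one_rpow] using this
  have h3 : Tendsto (fun n : ℕ => (Real.GammaSeq x n)⁻¹ * ((n : ℝ) / ((n : ℝ) + 1)) ^ x)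
      atTop (𝓝 ((Real.Gamma x)⁻¹)) := by
    simpa using h1.mul h2
  have heq : ∀ᶠ n : ℕ in atTop,
      (Real.GammaSeq x n)⁻¹ * ((n : ℝ) / ((n : ℝ) + 1)) ^ x
        = P x (n + 1) / (((n + 1).factorial : ℝ) * ((n + 1 : ℕ) : ℝ) ^ (x - 1)) := by
    filter_upwards [eventually_ge_atTop 1] with n hn
    have hn0 : (0 : ℝ) < (n : ℝ) := by exact_mod_cast hn
    have hn1 : (0 : ℝ) < (n : ℝ) + 1 := by linarith
    have hnx : (0 : ℝ) < (n : ℝ) ^ x := Real.rpow_pos_of_pos hn0 x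
    have hn1x : (0 : ℝ) < ((n : ℝ) + 1) ^ x := Real.rpow_pos_of_pos hn1 x
    have hfac : ((n.factorial : ℕ) : ℝ) ≠ 0 := by exact_mod_cast n.factorial_ne_zero
    rw [Real.GammaSeq, ← P_eq_prod, inv_div, Real.div_rpow hn0.le hn1.le]
    have hpow : ((n : ℝ) + 1) ^ x = ((n : ℝ) + 1) ^ (x - 1) * ((n : ℝ) + 1) := by
      rw [← Real.rpow_add_one hn1.ne' (x - 1)]; ring_nf
    push_cast [Nat.factorial_succ]
    field_simp
    rw [hpow]; ring
  refine (tendsto_add_atTop_iff_nat 1).1 (h3.congr' heq |>.congr fun n => ?_)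
  rfl

end Gauss15

namespace Gauss15

variable (a b : ℝ)

/-- The term of the hypergeometric series at 1. -/
noncomputable def T (c : ℝ) (j : ℕ) : ℝ := P a j * P b j / (P c j * (j.factorial : ℝ))

lemma T_zero (c : ℝ) : T a b c 0 = 1 := by simp [T, P_zero]

/-- Nonterminating case: `T j * j^(c+1-a-b)` converges. -/
lemma T_asymp {c : ℝ} (ha : ∀ m : ℕ, a ≠ -(m : ℝ)) (hb : ∀ m : ℕ, b ≠ -(m : ℝ))
    (hc : ∀ m : ℕ, c ≠ -(m : ℝ)) :
    Tendsto (fun j : ℕ => T a b c j * (j : ℝ) ^ (c + 1 - a - b)) atTop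
      (𝓝 (Real.Gamma c / (Real.Gamma a * Real.Gamma b))) := by
  have hA := P_asymp ha
  have hB := P_asymp hb
  have hC := P_asymp hc
  have hΓc : Real.Gamma c ≠ 0 := Real.Gamma_ne_zero hc
  have key := (hA.mul hB).div hC (inv_ne_zero hΓc)
  have heq : ∀ᶠ j : ℕ in atTop,
      P a j / ((j.factorial : ℝ) * (j : ℝ) ^ (a - 1)) *
          (P b j / ((j.factorial : ℝ) * (j : ℝ) ^ (b - 1))) /
        (P c j / ((j.factorial : ℝ) * (j : ℝ) ^ (c - 1)))
        = T a b c j * (j : ℝ) ^ (c + 1 - a - b) := by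
    filter_upwards [eventually_ge_atTop 1] with j hj
    have hj0 : (0 : ℝ) < (j : ℝ) := by exact_mod_cast hj
    have hfac : ((j.factorial : ℕ) : ℝ) ≠ 0 := by exact_mod_cast j.factorial_ne_zero
    have h1 : ((j : ℝ)) ^ (a - 1) ≠ 0 := (Real.rpow_pos_of_pos hj0 _).ne'
    have h2 : ((j : ℝ)) ^ (b - 1) ≠ 0 := (Real.rpow_pos_of_pos hj0 _).ne'
    have h3 : ((j : ℝ)) ^ (c - 1) ≠ 0 := (Real.rpow_pos_of_pos hj0 _).ne'
    have hrw : (j : ℝ) ^ (c + 1 - a - b) * ((j : ℝ) ^ (a - 1) * (j : ℝ) ^ (b - 1))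
        = (j : ℝ) ^ (c - 1) := by
      rw [← Real.rpow_add hj0, ← Real.rpow_add hj0]; ring_nf
    rw [T]
    have hP : P c j ≠ 0 := P_ne_zero hc j
    field_simp
    rw [← hrw]; ring
  have := key.congr' heq
  convert this using 2
  have hΓa : Real.Gamma a ≠ 0 := Real.Gamma_ne_zero ha
  have hΓb : Real.Gamma b ≠ 0 := Real.Gamma_ne_zero hb
  field_simp

end Gauss15

namespace Gauss15

lemma P_neg_nat_vanish {m j : ℕ} (h : m < j) : P (-(m : ℝ)) j = 0 := by
  rw [P_eq_prod]
  exact prod_eq_zero (mem_range.2 h) (by simp)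

variable (a b : ℝ)

lemma summable_and_decay {c : ℝ} (h : 0 < c - a - b) (hc : ∀ m : ℕ, c ≠ -(m : ℝ)) :
    Summable (T a b c) ∧ Tendsto (fun j : ℕ => (j : ℝ) * T a b c j) atTop (𝓝 0) := by
  by_cases hterm : (∃ m : ℕ, a = -(m : ℝ)) ∨ (∃ m : ℕ, b = -(m : ℝ))
  · -- terminating: the terms vanish eventually
    obtain ⟨m, hm⟩ : ∃ m : ℕ, ∀ j, m < j → T a b c j = 0 := by
      rcases hterm with ⟨m, rfl⟩ | ⟨m, rfl⟩
      · exact ⟨m, fun j hj => by rw [T, P_neg_nat_vanish hj, zero_mul, zero_div]⟩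
      · exact ⟨m, fun j hj => by rw [T, P_neg_nat_vanish hj, mul_zero, zero_div]⟩
    constructor
    · refine summable_of_ne_finset_zero (s := range (m + 1)) fun j hj => ?_
      exact hm j (by simpa using hj)
    · refine tendsto_const_nhds.congr' ?_
      filter_upwards [eventually_gt_atTop m] with j hj
      rw [hm j hj, mul_zero]
  · push_neg at hterm
    obtain ⟨ha, hb⟩ := hterm
    have key := T_asymp a b ha hb hc
    set L := Real.Gamma c / (Real.Gamma a * Real.Gamma b) with hL
    constructor
    · refine summable_of_isBigO_nat (Real.summable_nat_rpow.2 (show a + b - c - 1 < -1 by linarith)) ?_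
      refine Asymptotics.isBigO_of_div_tendsto_nhds ?_ L ?_
      · filter_upwards [eventually_ge_atTop 1] with j hj hj0
        exact absurd hj0 (Real.rpow_pos_of_pos (by exact_mod_cast hj) _).ne'
      · refine key.congr' ?_
        filter_upwards [eventually_ge_atTop 1] with j hj
        have hj0 : (0 : ℝ) < (j : ℝ) := by exact_mod_cast hj
        simp only [Pi.div_apply]
        rw [div_eq_mul_inv, ← Real.rpow_neg hj0.le, show -(a + b - c - 1) = c + 1 - a - b by ring]
    · have hpow : Tendsto (fun j : ℕ => ((j : ℝ)) ^ (-(c - a - b))) atTop (𝓝 0) :=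
        (tendsto_rpow_neg_atTop h).comp tendsto_natCast_atTop_atTop
      have := key.mul hpow
      rw [mul_zero] at this
      refine this.congr' ?_
      filter_upwards [eventually_ge_atTop 1] with j hj
      have hj0 : (0 : ℝ) < (j : ℝ) := by exact_mod_cast hj
      rw [mul_assoc, ← Real.rpow_add hj0, show c + 1 - a - b + -(c - a - b) = 1 by ring,
        Real.rpow_one]
      ring

end Gauss15

namespace Gauss15

lemma P_shift (c : ℝ) (j : ℕ) : P (c + 1) j * c = P c j * (c + j) := by
  induction j with
  | zero => simp [P_zero]
  | succ n ih =>
    rw [P_succ, P_succ]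
    push_cast
    calc P (c + 1) n * (c + 1 + n) * c = P (c + 1) n * c * (c + 1 + n) := by ring
      _ = P c n * (c + n) * (c + 1 + n) := by rw [ih]
      _ = P c n * (c + n) * (c + (n + 1)) := by ring

variable (a b : ℝ)

lemma contig_term {c : ℝ} (hc : ∀ m : ℕ, c ≠ -(m : ℝ)) (j : ℕ) :
    c * (c - a - b) * T a b c j - (c - a) * (c - b) * T a b (c + 1) j
      = c * ((-((j : ℝ) + 1)) * T a b c (j + 1) - (-(j : ℝ)) * T a b c j) := by
  have hc0 : c ≠ 0 := by have := hc 0; simpa using this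
  have hcj : c + (j : ℝ) ≠ 0 := by
    have := hc j; intro h0; exact this (by linarith)
  have hPc : P c j ≠ 0 := P_ne_zero hc j
  have hfac : ((j.factorial : ℕ) : ℝ) ≠ 0 := by exact_mod_cast j.factorial_ne_zero
  have hshift : P (c + 1) j = P c j * (c + j) / c := by
    rw [eq_div_iff hc0, P_shift]
  have hfs : (((j + 1).factorial : ℕ) : ℝ) = ((j : ℝ) + 1) * (j.factorial : ℝ) := by
    push_cast [Nat.factorial_succ]; ring
  simp only [T, P_succ, hshift, hfs]
  field_simp
  ring

lemma contig {c : ℝ} (h : 0 < c - a - b) (hc : ∀ m : ℕ, c ≠ -(m : ℝ)) :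
    c * (c - a - b) * (∑' j, T a b c j) = (c - a) * (c - b) * (∑' j, T a b (c + 1) j) := by
  obtain ⟨hsum, hdecay⟩ := summable_and_decay a b h hc
  have hc1 : ∀ m : ℕ, c + 1 ≠ -(m : ℝ) := by
    intro m h0
    exact hc (m + 1) (by push_cast; linarith)
  have h1 : 0 < (c + 1) - a - b := by linarith
  obtain ⟨hsum1, _⟩ := summable_and_decay a b h1 hc1
  set D : ℕ → ℝ := fun j => c * (c - a - b) * T a b c j - (c - a) * (c - b) * T a b (c + 1) j
    with hD
  have hDsum : Summable D := (hsum.mul_left _).sub (hsum1.mul_left _)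
  set G : ℕ → ℝ := fun j => -(j : ℝ) * T a b c j with hG
  have hpartial : ∀ N, ∑ j ∈ range N, D j = c * G N := by
    intro N
    have hterm : ∀ j, D j = c * G (j + 1) - c * G j := by
      intro j
      rw [hD]
      simp only
      rw [contig_term a b hc j]
      simp only [hG]
      push_cast
      ring
    calc ∑ j ∈ range N, D j = ∑ j ∈ range N, (c * G (j + 1) - c * G j) := by
          exact Finset.sum_congr rfl fun j _ => hterm j
      _ = c * G N - c * G 0 := Finset.sum_range_sub (fun j => c * G j) N
      _ = c * G N := by simp [hG]
  have hlim : Tendsto (fun N => ∑ j ∈ range N, D j) atTop (𝓝 0) := by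
    have : Tendsto (fun N : ℕ => c * G N) atTop (𝓝 (c * (-0))) := by
      exact (hdecay.neg.const_mul c).congr fun N => by simp only [hG]; ring
    simp only [neg_zero, mul_zero] at this
    exact this.congr fun N => (hpartial N).symm
  have h2 : Tendsto (fun N => ∑ j ∈ range N, D j) atTop (𝓝 (∑' j, D j)) :=
    hDsum.hasSum.tendsto_sum_nat
  have hDzero : ∑' j, D j = 0 := tendsto_nhds_unique h2 hlim
  rw [hD] at hDzero
  rw [Summable.tsum_sub (hsum.mul_left _) (hsum1.mul_left _), tsum_mul_left, tsum_mul_left] at hDzero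
  linarith

end Gauss15

namespace Gauss15

variable (a b : ℝ)

noncomputable def F (c : ℝ) : ℝ := ∑' j, T a b c j

lemma iterate {c : ℝ} (h : 0 < c - a - b) (hc : ∀ m : ℕ, c ≠ -(m : ℝ)) (n : ℕ) :
    F a b c * (P c n * P (c - a - b) n)
      = F a b (c + n) * (P (c - a) n * P (c - b) n) := by
  induction n with
  | zero => simp [P_zero]
  | succ n ih =>
    have hcn : ∀ m : ℕ, c + (n : ℝ) ≠ -(m : ℝ) := by
      intro m h0
      exact hc (m + n) (by push_cast; linarith)
    have hn : 0 < (c + n) - a - b := by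
      have : (0 : ℝ) ≤ n := Nat.cast_nonneg n
      linarith
    have hstep : (c + n) * ((c + n) - a - b) * F a b (c + n)
        = ((c + n) - a) * ((c + n) - b) * F a b (c + n + 1) := contig a b hn hcn
    push_cast
    rw [P_succ, P_succ, P_succ, P_succ, show c + ((n : ℝ) + 1) = c + n + 1 by ring]
    calc F a b c * (P c n * (c + n) * (P (c - a - b) n * (c - a - b + n)))
        = F a b c * (P c n * P (c - a - b) n) * ((c + n) * (c - a - b + n)) := by ring
      _ = F a b (c + n) * (P (c - a) n * P (c - b) n) * ((c + n) * (c - a - b + n)) := by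
          rw [ih]
      _ = ((c + n) * ((c + n) - a - b) * F a b (c + n)) * (P (c - a) n * P (c - b) n) := by
          ring
      _ = (((c + n) - a) * ((c + n) - b) * F a b (c + n + 1)) * (P (c - a) n * P (c - b) n) := by
          rw [hstep]
      _ = F a b (c + n + 1) * (P (c - a) n * (c - a + n) * (P (c - b) n * (c - b + n))) := by
          ring

end Gauss15

namespace Gauss15

variable (a b : ℝ)

lemma tendsto_F_one {c : ℝ} (h : 0 < c - a - b) (hc : ∀ m : ℕ, c ≠ -(m : ℝ)) :
    Tendsto (fun n : ℕ => F a b (c + n)) atTop (𝓝 1) := by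
  have hcn : ∀ n : ℕ, ∀ m : ℕ, c + (n : ℝ) ≠ -(m : ℝ) := by
    intro n m h0; exact hc (m + n) (by push_cast; linarith)
  have hn : ∀ n : ℕ, 0 < (c + n) - a - b := by
    intro n; have : (0 : ℝ) ≤ n := Nat.cast_nonneg n; linarith
  have hsum : ∀ n : ℕ, Summable (T a b (c + n)) :=
    fun n => (summable_and_decay a b (hn n) (hcn n)).1
  obtain ⟨n₀, hn₀⟩ := exists_nat_ge (1 - c)
  have hcn₀ : (1 : ℝ) ≤ c + n₀ := by linarith
  have hsum₀ : Summable fun j => |T a b (c + n₀) (j + 1)| :=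
    ((summable_nat_add_iff 1).2 (hsum n₀)).abs
  set K := ∑' j, |T a b (c + n₀) (j + 1)| with hK
  -- pointwise bound for n ≥ n₀
  have hbound : ∀ n : ℕ, n₀ ≤ n → ∀ j : ℕ,
      |T a b (c + n) (j + 1)| ≤ (c + n₀) / (c + n) * |T a b (c + n₀) (j + 1)| := by
    intro n hn' j
    have hpos₀ : (0 : ℝ) < c + n₀ := by linarith
    have hle : (c + n₀ : ℝ) ≤ c + n := by
      have : (n₀ : ℝ) ≤ n := by exact_mod_cast hn'
      linarith
    have hposn : (0 : ℝ) < c + n := lt_of_lt_of_le hpos₀ hle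
    -- P comparison
    have hP : (c + n) * P (c + n₀) (j + 1) ≤ (c + n₀) * P (c + n) (j + 1) := by
      rw [P_eq_prod, P_eq_prod, Finset.prod_range_succ', Finset.prod_range_succ']
      push_cast
      simp only [add_zero]
      have hprod : (∏ x ∈ range j, (c + (n₀ : ℝ) + ((x : ℝ) + 1)))
          ≤ ∏ x ∈ range j, (c + (n : ℝ) + ((x : ℝ) + 1)) :=
        Finset.prod_le_prod (fun i _ => by positivity) fun i _ => by linarith
      calc (c + (n : ℝ)) * ((∏ x ∈ range j, (c + (n₀ : ℝ) + ((x : ℝ) + 1))) * (c + n₀))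
          = (c + (n : ℝ)) * (c + n₀) * ∏ x ∈ range j, (c + (n₀ : ℝ) + ((x : ℝ) + 1)) := by ring
        _ ≤ (c + (n : ℝ)) * (c + n₀) * ∏ x ∈ range j, (c + (n : ℝ) + ((x : ℝ) + 1)) :=
            mul_le_mul_of_nonneg_left hprod (by positivity)
        _ = (c + (n₀ : ℝ)) * ((∏ x ∈ range j, (c + (n : ℝ) + ((x : ℝ) + 1))) * (c + n)) := by ring
    have hPpos₀ : 0 < P (c + n₀) (j + 1) := P_pos hpos₀ _
    have hPposn : 0 < P (c + n) (j + 1) := P_pos hposn _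
    have hfac : (0 : ℝ) < ((j + 1).factorial : ℝ) := by
      exact_mod_cast (j + 1).factorial_pos
    rw [T, T, abs_div, abs_div, abs_mul (P (c + n) (j + 1)),
        abs_mul (P (c + n₀) (j + 1)), abs_of_pos hPpos₀, abs_of_pos hPposn,
        abs_of_pos hfac]
    rw [div_mul_div_comm, div_le_div_iff₀ (by positivity) (by positivity)]
    have hnum : (0 : ℝ) ≤ |P a (j + 1) * P b (j + 1)| := abs_nonneg _
    calc |P a (j + 1) * P b (j + 1)| * ((c + n) * (P (c + n₀) (j + 1) * ((j + 1).factorial : ℝ)))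
        = ((c + n) * P (c + n₀) (j + 1)) * (|P a (j + 1) * P b (j + 1)| * ((j + 1).factorial : ℝ)) := by
          ring
      _ ≤ ((c + n₀) * P (c + n) (j + 1)) * (|P a (j + 1) * P b (j + 1)| * ((j + 1).factorial : ℝ)) := by
          refine mul_le_mul_of_nonneg_right hP (by positivity)
      _ = (c + n₀) * |P a (j + 1) * P b (j + 1)| * (P (c + n) (j + 1) * ((j + 1).factorial : ℝ)) := by
          ring
  -- tail bound
  have htail : ∀ n : ℕ, n₀ ≤ n → |F a b (c + n) - 1| ≤ (c + n₀) / (c + n) * K := by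
    intro n hn'
    have hpos₀ : (0 : ℝ) < c + n₀ := by linarith
    have hposn : (0 : ℝ) < c + n := by
      have : (n₀ : ℝ) ≤ n := by exact_mod_cast hn'
      linarith
    have hshift : Summable fun j => T a b (c + n) (j + 1) :=
      (summable_nat_add_iff 1).2 (hsum n)
    have hFeq : F a b (c + n) - 1 = ∑' j, T a b (c + n) (j + 1) := by
      rw [show F a b (c + n) = ∑' j, T a b (c + n) j from rfl,
        Summable.tsum_eq_zero_add (hsum n), T_zero]
      ring
    rw [hFeq]
    calc |∑' j, T a b (c + n) (j + 1)| ≤ ∑' j, |T a b (c + n) (j + 1)| := by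
          simpa [Real.norm_eq_abs] using
            norm_tsum_le_tsum_norm (f := fun j => T a b (c + n) (j + 1))
              (by simpa [Real.norm_eq_abs] using hshift.abs)
      _ ≤ ∑' j, (c + n₀) / (c + n) * |T a b (c + n₀) (j + 1)| := by
          refine Summable.tsum_le_tsum (hbound n hn') hshift.abs (hsum₀.mul_left _)
      _ = (c + n₀) / (c + n) * K := tsum_mul_left
  -- conclude
  have hg : Tendsto (fun n : ℕ => (c + n₀) / (c + n) * K) atTop (𝓝 0) := by
    have h1 : Tendsto (fun n : ℕ => c + (n : ℝ)) atTop atTop :=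
      tendsto_atTop_add_const_left _ c tendsto_natCast_atTop_atTop
    have h2 : Tendsto (fun n : ℕ => (c + (n : ℝ))⁻¹) atTop (𝓝 0) := h1.inv_tendsto_atTop
    have := (h2.const_mul ((c + n₀) * K))
    rw [mul_zero] at this
    exact this.congr fun n => by rw [div_eq_mul_inv]; ring
  have hsq : Tendsto (fun n : ℕ => F a b (c + n) - 1) atTop (𝓝 0) := by
    refine squeeze_zero_norm' ?_ hg
    filter_upwards [eventually_ge_atTop n₀] with n hn'
    exact htail n hn'
  have := hsq.add_const 1
  simpa using this

end Gauss15

namespace Gauss15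

lemma tendsto_Q {a b c : ℝ} (h : 0 < c - a - b)
    (hc : ∀ m : ℕ, c ≠ -(m : ℝ)) (hca : ∀ m : ℕ, c - a ≠ -(m : ℝ))
    (hcb : ∀ m : ℕ, c - b ≠ -(m : ℝ)) :
    Tendsto (fun n : ℕ => (P (c - a) n * P (c - b) n) / (P c n * P (c - a - b) n))
      atTop
      (𝓝 (Real.Gamma c * Real.Gamma (c - a - b) / (Real.Gamma (c - a) * Real.Gamma (c - b)))) := by
  have hδ : ∀ m : ℕ, c - a - b ≠ -(m : ℝ) := by
    intro m h0
    have : (0 : ℝ) ≤ m := Nat.cast_nonneg m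
    linarith
  have hΓc : Real.Gamma c ≠ 0 := Real.Gamma_ne_zero hc
  have hΓδ : Real.Gamma (c - a - b) ≠ 0 := Real.Gamma_ne_zero hδ
  have hΓca : Real.Gamma (c - a) ≠ 0 := Real.Gamma_ne_zero hca
  have hΓcb : Real.Gamma (c - b) ≠ 0 := Real.Gamma_ne_zero hcb
  have key := ((P_asymp hca).mul (P_asymp hcb)).div ((P_asymp hc).mul (P_asymp hδ))
    (by simp [hΓc, hΓδ])
  have heq : ∀ᶠ n : ℕ in atTop,
      P (c - a) n / ((n.factorial : ℝ) * (n : ℝ) ^ (c - a - 1)) *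
          (P (c - b) n / ((n.factorial : ℝ) * (n : ℝ) ^ (c - b - 1))) /
        (P c n / ((n.factorial : ℝ) * (n : ℝ) ^ (c - 1)) *
          (P (c - a - b) n / ((n.factorial : ℝ) * (n : ℝ) ^ (c - a - b - 1))))
        = (P (c - a) n * P (c - b) n) / (P c n * P (c - a - b) n) := by
    filter_upwards [eventually_ge_atTop 1] with n hn
    have hn0 : (0 : ℝ) < (n : ℝ) := by exact_mod_cast hn
    have hfac : ((n.factorial : ℕ) : ℝ) ≠ 0 := by exact_mod_cast n.factorial_ne_zero
    have e1 : (n : ℝ) ^ (c - a - 1) * (n : ℝ) ^ (c - b - 1)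
        = (n : ℝ) ^ (c - 1) * (n : ℝ) ^ (c - a - b - 1) := by
      rw [← Real.rpow_add hn0, ← Real.rpow_add hn0]
      ring_nf
    have p1 : ((n : ℝ)) ^ (c - a - 1) ≠ 0 := (Real.rpow_pos_of_pos hn0 _).ne'
    have p2 : ((n : ℝ)) ^ (c - b - 1) ≠ 0 := (Real.rpow_pos_of_pos hn0 _).ne'
    have p3 : ((n : ℝ)) ^ (c - 1) ≠ 0 := (Real.rpow_pos_of_pos hn0 _).ne'
    have p4 : ((n : ℝ)) ^ (c - a - b - 1) ≠ 0 := (Real.rpow_pos_of_pos hn0 _).ne'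
    rw [div_mul_div_comm, div_mul_div_comm,
      show (n.factorial : ℝ) * (n : ℝ) ^ (c - a - 1) * ((n.factorial : ℝ) * (n : ℝ) ^ (c - b - 1))
          = (n.factorial : ℝ) * (n : ℝ) ^ (c - 1) * ((n.factorial : ℝ) * (n : ℝ) ^ (c - a - b - 1))
        by rw [mul_mul_mul_comm, e1, mul_mul_mul_comm]]
    have hPc : P c n ≠ 0 := P_ne_zero hc n
    have hPδ : P (c - a - b) n ≠ 0 := (P_pos h n).ne'
    field_simp
  have hval : (Real.Gamma (c - a))⁻¹ * (Real.Gamma (c - b))⁻¹ /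
      ((Real.Gamma c)⁻¹ * (Real.Gamma (c - a - b))⁻¹)
      = Real.Gamma c * Real.Gamma (c - a - b) / (Real.Gamma (c - a) * Real.Gamma (c - b)) := by
    field_simp
  rw [← hval]
  exact key.congr' heq

end Gauss15

/-- Gauss's summation theorem: `₂F₁(a, b; c; 1) = Γ(c)Γ(c-a-b)/(Γ(c-a)Γ(c-b))`. -/
theorem stmt_15 (a b c : ℝ) (h : 0 < c - a - b)
    (hc : ∀ m : ℕ, c ≠ -(m : ℝ)) (hca : ∀ m : ℕ, c - a ≠ -(m : ℝ))
    (hcb : ∀ m : ℕ, c - b ≠ -(m : ℝ)) :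
    HasSum
      (fun j : ℕ =>
        (ascPochhammer ℝ j).eval a * (ascPochhammer ℝ j).eval b /
          ((ascPochhammer ℝ j).eval c * (Nat.factorial j : ℝ)))
      (Real.Gamma c * Real.Gamma (c - a - b) / (Real.Gamma (c - a) * Real.Gamma (c - b))) := by
  open Gauss15 in
  have hsum : Summable (T a b c) := (summable_and_decay a b h hc).1
  have hF : F a b c = Real.Gamma c * Real.Gamma (c - a - b) /
      (Real.Gamma (c - a) * Real.Gamma (c - b)) := by
    have hconst : ∀ n : ℕ, F a b c
        = F a b (c + n) * ((P (c - a) n * P (c - b) n) / (P c n * P (c - a - b) n)) := by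
      intro n
      have hden : P c n * P (c - a - b) n ≠ 0 :=
        mul_ne_zero (P_ne_zero hc n) (P_pos h n).ne'
      have hit := iterate a b h hc n
      rw [← mul_div_assoc, eq_div_iff hden]
      linear_combination hit
    have hlim : Tendsto (fun n : ℕ => F a b (c + n)
        * ((P (c - a) n * P (c - b) n) / (P c n * P (c - a - b) n))) atTop
        (𝓝 (1 * (Real.Gamma c * Real.Gamma (c - a - b) /
          (Real.Gamma (c - a) * Real.Gamma (c - b))))) :=
      (tendsto_F_one a b h hc).mul (tendsto_Q h hc hca hcb)
    have hconst' : Tendsto (fun _ : ℕ => F a b c) atTop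
        (𝓝 (1 * (Real.Gamma c * Real.Gamma (c - a - b) /
          (Real.Gamma (c - a) * Real.Gamma (c - b))))) :=
      hlim.congr fun n => (hconst n).symm
    have := tendsto_nhds_unique tendsto_const_nhds hconst'
    rw [this, one_mul]
  have := hsum.hasSum
  rw [show ∑' j, T a b c j = F a b c from rfl, hF] at this
  exact this
end

section
/- Let F_q be a finite field with q ≡ 1 (mod 3), let ψ be a multiplicative character of F_q of order 3, and ε the trivial character. Then the Gaussian hypergeometric value ₂F₁(ψ, ψ̄; ε | 1)_q equals -1/q. -/
open scoped BigOperators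

/-- Greene's normalized Jacobi sum `binom(A, B) := B(-1)/q · ∑_x A(x) B̄(1-x)`
(characters vanish on `0`). -/
noncomputable def greeneBinom {F : Type*} [Field F] [Fintype F] (A B : MulChar F ℂ) : ℂ :=
  B (-1) / (Fintype.card F : ℂ) * ∑ x : F, A x * B⁻¹ (1 - x)

/-- Greene's Gaussian hypergeometric function
`₂F₁(A, B; C | x)_q := (q/(q-1)) ∑_χ binom(Aχ, χ) binom(Bχ, Cχ) χ(x)`. -/
noncomputable def greene2F1 {F : Type*} [Field F] [Fintype F]
    (A B C : MulChar F ℂ) (x : F) : ℂ :=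
  haveI : Fintype (MulChar F ℂ) := Fintype.ofFinite _
  (Fintype.card F : ℂ) / ((Fintype.card F : ℂ) - 1) *
    ∑ χ : MulChar F ℂ, greeneBinom (A * χ) χ * greeneBinom (B * χ) (C * χ) * χ x

section Aux

open Finset

variable {F : Type*} [Field F] [Fintype F]

lemma aux_sum_char_ne {a : F} (ha : a ≠ 1) [Fintype (MulChar F ℂ)] :
    ∑ χ : MulChar F ℂ, χ a = 0 := by
  have : NeZero ((Monoid.exponent Fˣ : ℂ)) :=
    ⟨Nat.cast_ne_zero.mpr Monoid.exponent_ne_zero_of_finite⟩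
  obtain ⟨χ, hχ⟩ := MulChar.exists_apply_ne_one_of_hasEnoughRootsOfUnity F ℂ ha
  refine eq_zero_of_mul_eq_self_left hχ ?_
  simp only [Finset.mul_sum, ← MulChar.mul_apply]
  exact Fintype.sum_bijective _ (Group.mulLeft_bijective χ) _ _ fun χ' ↦ rfl

lemma aux_sum_char [DecidableEq F] (a : F) [Fintype (MulChar F ℂ)] :
    ∑ χ : MulChar F ℂ, χ a = if a = 1 then ((Fintype.card F : ℂ) - 1) else 0 := by
  split_ifs with h
  · subst h
    simp only [MulChar.map_one, Finset.sum_const, Finset.card_univ, nsmul_eq_mul, mul_one]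
    have : NeZero ((Monoid.exponent Fˣ : ℂ)) :=
      ⟨Nat.cast_ne_zero.mpr Monoid.exponent_ne_zero_of_finite⟩
    have h1 : Nat.card (MulChar F ℂ) = Nat.card Fˣ :=
      MulChar.card_eq_card_units_of_hasEnoughRootsOfUnity F ℂ
    rw [← Nat.card_eq_fintype_card, h1, Nat.card_eq_fintype_card, Fintype.card_units,
      Nat.cast_sub Fintype.card_pos, Nat.cast_one]
  · exact aux_sum_char_ne h

lemma aux_key (ψ χ : MulChar F ℂ) :
    greeneBinom (ψ * χ) χ * greeneBinom (ψ⁻¹ * χ) χ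
      = 1 / (Fintype.card F : ℂ) ^ 2 *
        ∑ x : F, ∑ y : F,
          (ψ x * ψ⁻¹ y) * χ (x * y * ((1 - x) * (1 - y))⁻¹) := by
  rw [greeneBinom, greeneBinom, mul_mul_mul_comm, Finset.sum_mul_sum]
  have hone : χ (-1) / (Fintype.card F : ℂ) * (χ (-1) / (Fintype.card F : ℂ))
      = 1 / (Fintype.card F : ℂ) ^ 2 := by
    rw [div_mul_div_comm, ← map_mul]
    norm_num
    ring
  rw [hone]
  congr 1
  refine Finset.sum_congr rfl fun x _ ↦ Finset.sum_congr rfl fun y _ ↦ ?_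
  simp only [MulChar.mul_apply, MulChar.inv_apply' χ, map_mul, mul_inv]
  ring

lemma aux_inner [DecidableEq F] (ψ : MulChar F ℂ) (x : F) :
    (∑ y : F, (ψ x * ψ⁻¹ y) *
        (if x * y * ((1 - x) * (1 - y))⁻¹ = 1 then ((Fintype.card F : ℂ) - 1) else 0))
      = (ψ x * ψ⁻¹ (1 - x)) * ((Fintype.card F : ℂ) - 1) := by
  rw [Finset.sum_eq_single (1 - x)]
  · by_cases hx0 : x = 0
    · simp [hx0, MulChar.map_zero]
    by_cases hx1 : x = 1
    · simp [hx1, MulChar.map_zero]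
    · have h1 : (1 : F) - (1 - x) = x := by ring
      have hne : (1 - x) * x ≠ 0 :=
        mul_ne_zero (sub_ne_zero.mpr fun h ↦ hx1 h.symm) hx0
      rw [h1, if_pos]
      rw [mul_comm x (1 - x), mul_inv_cancel₀ hne]
  · intro y _ hy
    rw [if_neg, mul_zero]
    intro hc
    by_cases hb : (1 - x) * (1 - y) = 0
    · rw [hb, inv_zero, mul_zero] at hc
      exact zero_ne_one hc
    · have h2 : x * y = (1 - x) * (1 - y) := by
        field_simp at hc
        exact (div_eq_one_iff_eq hb).mp hc
      exact hy (by linear_combination h2)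
  · intro h
    exact absurd (Finset.mem_univ _) h

end Aux

/-- `₂F₁(ψ, ψ̄; ε | 1)_q = -1/q` for a cubic character `ψ` when `q ≡ 1 (mod 3)`. -/
theorem stmt_16 {F : Type*} [Field F] [Fintype F]
    (hq : Fintype.card F % 3 = 1) (ψ : MulChar F ℂ) (hψ : orderOf ψ = 3) :
    greene2F1 ψ ψ⁻¹ 1 (1 : F) = -1 / (Fintype.card F : ℂ) := by
  classical
  letI : Fintype (MulChar F ℂ) := Fintype.ofFinite _
  set q : ℂ := (Fintype.card F : ℂ) with hqdef
  -- basic facts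
  have hψ1 : ψ ≠ 1 := by
    intro h
    rw [h, orderOf_one] at hψ
    norm_num at hψ
  have hψ3 : ψ ^ 3 = 1 := hψ ▸ pow_orderOf_eq_one ψ
  have hpsi_neg : ψ (-1) = 1 := by
    have h2 : ψ (-1) * ψ (-1) = 1 := by
      rw [← map_mul]
      norm_num
    have h3 : ψ (-1) ^ 3 = 1 := by
      rw [← MulChar.pow_apply' ψ (by norm_num) (-1), hψ3, MulChar.one_apply (isUnit_one.neg)]
    have : ψ (-1) ^ 3 = ψ (-1) := by
      rw [pow_succ, pow_two, h2, one_mul]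
    rw [this] at h3
    exact h3
  have hJ : jacobiSum ψ ψ⁻¹ = -1 := by
    rw [jacobiSum_nontrivial_inv hψ1, hpsi_neg]
  have hcard : 1 < Fintype.card F := Fintype.one_lt_card
  have hq0 : q ≠ 0 := Nat.cast_ne_zero.mpr (by omega)
  have hq1 : q - 1 ≠ 0 := by
    rw [sub_ne_zero, hqdef]
    exact_mod_cast (by omega : Fintype.card F ≠ 1)
  -- main computation
  rw [greene2F1]
  have hsum : ∑ χ : MulChar F ℂ,
      greeneBinom (ψ * χ) χ * greeneBinom (ψ⁻¹ * χ) (1 * χ) * χ 1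
      = 1 / q ^ 2 * (-(q - 1)) := by
    have e1 : ∀ χ : MulChar F ℂ,
        greeneBinom (ψ * χ) χ * greeneBinom (ψ⁻¹ * χ) (1 * χ) * χ 1
        = 1 / q ^ 2 * ∑ x : F, ∑ y : F,
            (ψ x * ψ⁻¹ y) * χ (x * y * ((1 - x) * (1 - y))⁻¹) := by
      intro χ
      rw [one_mul, MulChar.map_one, mul_one, aux_key]
    rw [Finset.sum_congr rfl fun χ _ ↦ e1 χ, ← Finset.mul_sum]
    congr 1
    rw [Finset.sum_comm]
    have e2 : ∀ x : F, ∑ χ : MulChar F ℂ, ∑ y : F,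
        (ψ x * ψ⁻¹ y) * χ (x * y * ((1 - x) * (1 - y))⁻¹)
        = (ψ x * ψ⁻¹ (1 - x)) * (q - 1) := by
      intro x
      rw [Finset.sum_comm, ← aux_inner ψ x]
      refine Finset.sum_congr rfl fun y _ ↦ ?_
      rw [← Finset.mul_sum, aux_sum_char]
    rw [Finset.sum_congr rfl fun x _ ↦ e2 x, ← Finset.sum_mul]
    have : (∑ x : F, ψ x * ψ⁻¹ (1 - x)) = -1 := hJ ▸ rfl
    rw [this]
    ring
  rw [hsum]
  rw [← hqdef]
  field_simp
end
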